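/- Let (T_k)_{k≥0} be ℕ-valued random variables with T_0 = 0 such that P(T_{k+1} − T_k > m·d | F_{T_k}) ≤ (1−p)^m for all k, m ∈ ℕ, where p ∈ (0,1) and d ≥ 1. Then almost surely limsup_{k→∞} T_k/k ≤ d/p; in particular, almost surely there exists a finite C_T with T_k ≤ C_T·k for all k. -/

import Mathlib

open MeasureTheory Filter

section Aux

open Real Finset

lemma aux_pullout {Ω : Type*} {m : MeasurableSpace Ω} {m0 : MeasurableSpace Ω} {μ : Measure Ω}
    [IsProbabilityMeasure μ] (hm : m ≤ m0)
    {f : Ω → ℝ} (hf : StronglyMeasurable[m] f) (hf0 : ∀ ω, 0 ≤ f ω)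
    {c : ℝ} (hc : 0 ≤ c) (hfc : ∀ ω, f ω ≤ c)
    {A : Set Ω} (hA : MeasurableSet A) {b : ℝ} (hb : 0 ≤ b)
    (hcond : ∀ᵐ ω ∂μ, (μ[A.indicator (fun _ => (1:ℝ)) | m]) ω ≤ b) :
    ∫ ω, f ω * A.indicator (fun _ => (1:ℝ)) ω ∂μ ≤ b * ∫ ω, f ω ∂μ := by
  have hInd : Integrable (A.indicator (fun _ => (1:ℝ))) μ :=
    (integrable_const (1:ℝ)).indicator hA
  have hfsm : AEStronglyMeasurable f μ := (hf.mono hm).aestronglyMeasurable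
  have hfbound : ∀ᵐ ω ∂μ, ‖f ω‖ ≤ c :=
    Eventually.of_forall fun ω => by
      rw [Real.norm_eq_abs, abs_of_nonneg (hf0 ω)]; exact hfc ω
  have hf_int : Integrable f μ := Integrable.mono' (integrable_const c) hfsm hfbound
  have hkey : μ[(fun ω => f ω * A.indicator (fun _ => (1:ℝ)) ω) | m]
      =ᵐ[μ] fun ω => f ω * (μ[A.indicator (fun _ => (1:ℝ)) | m]) ω :=
    condExp_stronglyMeasurable_mul_of_bound hm hf hInd c hfbound
  calc ∫ ω, f ω * A.indicator (fun _ => (1:ℝ)) ω ∂μ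
      = ∫ ω, (μ[(fun ω => f ω * A.indicator (fun _ => (1:ℝ)) ω) | m]) ω ∂μ :=
        (integral_condExp hm).symm
    _ = ∫ ω, f ω * (μ[A.indicator (fun _ => (1:ℝ)) | m]) ω ∂μ := integral_congr_ae hkey
    _ ≤ ∫ ω, b * f ω ∂μ := by
        refine integral_mono_ae (integrable_condExp.congr hkey) (hf_int.const_mul b) ?_
        filter_upwards [hcond] with ω hω
        calc f ω * (μ[A.indicator (fun _ => (1:ℝ)) | m]) ω
            ≤ f ω * b := mul_le_mul_of_nonneg_left hω (hf0 ω)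
          _ = b * f ω := mul_comm _ _
    _ = b * ∫ ω, f ω ∂μ := integral_const_mul b _

lemma aux_layer (l : ℝ) (hl : 0 ≤ l) (d N x : ℕ) (hd : 1 ≤ d) :
    Real.exp (l * min x (N*d)) ≤
      1 + (Real.exp (l*d) - 1) *
        ∑ m ∈ Finset.range N, Real.exp (l*d)^m * (if m * d < x then (1:ℝ) else 0) := by
  have hd0 : 0 < d := hd
  set r := Real.exp (l*(d:ℕ)) with hr
  have hr1 : 1 ≤ r := Real.one_le_exp (by positivity)
  set j : ℕ := min N (x ⌈/⌉ d) with hj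
  have hjN : j ≤ N := min_le_left _ _
  -- min x (N*d) ≤ d * j
  have key1 : min x (N*d) ≤ d * j := by
    rcases le_or_gt (x ⌈/⌉ d) N with h | h
    · have hjx : j = x ⌈/⌉ d := min_eq_right h
      have := le_smul_ceilDiv (b := x) hd0
      calc min x (N*d) ≤ x := min_le_left _ _
        _ ≤ d * (x ⌈/⌉ d) := by simpa [smul_eq_mul] using this
        _ = d * j := by rw [hjx]
    · have hjx : j = N := min_eq_left h.le
      calc min x (N*d) ≤ N*d := min_le_right _ _
        _ = d * j := by rw [hjx, Nat.mul_comm]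
  -- for m < j, m*d < x
  have key2 : ∀ m, m < j → m * d < x := by
    intro m hm
    by_contra hcon
    push_neg at hcon
    have : x ⌈/⌉ d ≤ m := by
      rw [ceilDiv_le_iff_le_mul hd0]
      calc x ≤ m * d := hcon
        _ = d * m := Nat.mul_comm _ _
    omega
  have hrj : Real.exp (l * min x (N*d)) ≤ r ^ j := by
    rw [hr, ← Real.exp_nat_mul]
    apply Real.exp_le_exp.2
    have hcast : ((min x (N*d) : ℕ) : ℝ) ≤ ((d * j : ℕ) : ℝ) := Nat.cast_le.2 key1
    calc l * ((min x (N*d) : ℕ) : ℝ) ≤ l * ((d*j : ℕ) : ℝ) :=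
          mul_le_mul_of_nonneg_left hcast hl
      _ = (j:ℝ) * (l * d) := by push_cast; ring
  have hgeom : (r:ℝ) ^ j = 1 + (r - 1) * ∑ m ∈ Finset.range j, r ^ m := by
    have := geom_sum_mul r j
    nlinarith [this]
  have hsum : ∑ m ∈ Finset.range j, r ^ m ≤
      ∑ m ∈ Finset.range N, r ^ m * (if m * d < x then (1:ℝ) else 0) := by
    have : ∀ m ∈ Finset.range j, r ^ m ≤ r ^ m * (if m * d < x then (1:ℝ) else 0) := by
      intro m hm
      rw [if_pos (key2 m (Finset.mem_range.1 hm)), mul_one]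
    calc ∑ m ∈ Finset.range j, r ^ m
        ≤ ∑ m ∈ Finset.range j, r ^ m * (if m * d < x then (1:ℝ) else 0) :=
          Finset.sum_le_sum this
      _ ≤ ∑ m ∈ Finset.range N, r ^ m * (if m * d < x then (1:ℝ) else 0) := by
          apply Finset.sum_le_sum_of_subset_of_nonneg
            (Finset.range_subset_range.2 hjN)
          intro m _ _
          positivity
  calc Real.exp (l * min x (N*d)) ≤ r ^ j := hrj
    _ = 1 + (r - 1) * ∑ m ∈ Finset.range j, r ^ m := hgeom
    _ ≤ 1 + (r - 1) * ∑ m ∈ Finset.range N, r ^ m * (if m * d < x then (1:ℝ) else 0) := by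
        have h1 : (0:ℝ) ≤ r - 1 := by linarith
        nlinarith [mul_le_mul_of_nonneg_left hsum h1]

lemma aux_min_add (a b c : ℕ) : min (a + b) c ≤ min a c + min b c := by omega

lemma aux_lambda (d : ℕ) (hd : 1 ≤ d) (p a : ℝ) (hp0 : 0 < p) (hp1 : p < 1)
    (ha : d/p < a) :
    ∃ l : ℝ, 0 < l ∧ (1-p) * Real.exp (l*d) < 1 ∧
      Real.exp (-(l*a)) *
        (1 + (Real.exp (l*d) - 1)/(1 - (1-p)*Real.exp (l*d))) < 1 := by
  have hd0 : (0:ℝ) < d := by exact_mod_cast hd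
  have hap : (d:ℝ) < a * p := (div_lt_iff₀ hp0).1 ha
  have ha0 : 0 < a := by nlinarith
  -- continuity: find small l
  have hcont : ContinuousAt (fun l : ℝ => (d:ℝ) * Real.exp (l*d) * (1 + l*a)) 0 := by
    fun_prop
  have h0 : (d:ℝ) * Real.exp (0*d) * (1 + 0*a) < a * p := by simpa using hap
  have hev1 : ∀ᶠ l in nhds (0:ℝ), (d:ℝ) * Real.exp (l*d) * (1 + l*a) < a*p :=
    hcont.eventually_lt continuousAt_const h0
  have hcont2 : ContinuousAt (fun l : ℝ => l * a) 0 := by fun_prop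
  have hev2 : ∀ᶠ l in nhds (0:ℝ), l * a < 1 :=
    hcont2.eventually_lt continuousAt_const (by simp)
  have hev : ∀ᶠ l in nhdsWithin (0:ℝ) (Set.Ioi 0),
      (d:ℝ) * Real.exp (l*d) * (1 + l*a) < a*p ∧ l * a < 1 ∧ 0 < l := by
    have h1 : ∀ᶠ l in nhdsWithin (0:ℝ) (Set.Ioi 0),
        (d:ℝ) * Real.exp (l*d) * (1 + l*a) < a*p ∧ l * a < 1 :=
      eventually_nhdsWithin_of_eventually_nhds (hev1.and hev2)
    have h2 : ∀ᶠ l in nhdsWithin (0:ℝ) (Set.Ioi 0), 0 < l :=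
      eventually_mem_nhdsWithin
    filter_upwards [h1, h2] with l hl1 hl2
    exact ⟨hl1.1, hl1.2, hl2⟩
  obtain ⟨l, hφ, hla, hl0⟩ := hev.exists
  refine ⟨l, hl0, ?_, ?_⟩
  · -- (1-p) * r < 1
    set r := Real.exp (l*d) with hrdef
    have hr0 : 0 < r := Real.exp_pos _
    have hr1 : 1 ≤ r := Real.one_le_exp (by positivity)
    have hexp : 1 - l*d ≤ Real.exp (-(l*d)) := by
      have := Real.add_one_le_exp (-(l*(d:ℝ)))
      linarith
    have hrl : r - 1 ≤ l*d*r := by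
      have h2 : Real.exp (-(l*(d:ℝ))) = r⁻¹ := by rw [hrdef, Real.exp_neg]
      rw [h2] at hexp
      have := mul_le_mul_of_nonneg_right hexp hr0.le
      rw [inv_mul_cancel₀ hr0.ne'] at this
      nlinarith
    have hldr : l*d*r < p := by nlinarith
    nlinarith
  · set r := Real.exp (l*d) with hrdef
    have hr0 : 0 < r := Real.exp_pos _
    have hr1 : 1 ≤ r := Real.one_le_exp (by positivity)
    have hexp : 1 - l*d ≤ Real.exp (-(l*d)) := by
      have := Real.add_one_le_exp (-(l*(d:ℝ)))
      linarith
    have hrl : r - 1 ≤ l*d*r := by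
      have h2 : Real.exp (-(l*(d:ℝ))) = r⁻¹ := by rw [hrdef, Real.exp_neg]
      rw [h2] at hexp
      have := mul_le_mul_of_nonneg_right hexp hr0.le
      rw [inv_mul_cancel₀ hr0.ne'] at this
      nlinarith
    have hldr : l*d*r < p := by nlinarith
    have hDpos : 0 < 1 - (1-p)*r := by nlinarith
    have hnum : (r - 1)/(1 - (1-p)*r) ≤ (l*d*r)/(p - l*d*r) := by
      rw [div_le_div_iff₀ hDpos (by nlinarith)]
      nlinarith [mul_le_mul_of_nonneg_left hrl hp0.le,
        mul_nonneg (mul_nonneg hp0.le (mul_nonneg (mul_nonneg hl0.le hd0.le) hr0.le))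
          (sub_nonneg.2 hr1)]
    have hlt : (l*d*r)/(p - l*d*r) < l*a := by
      rw [div_lt_iff₀ (by nlinarith)]
      nlinarith
    have hg : 1 + (r - 1)/(1 - (1-p)*r) < Real.exp (l*a) := by
      have := Real.add_one_le_exp (l*a)
      linarith
    have hexp2 : Real.exp (-(l*a)) = (Real.exp (l*a))⁻¹ := Real.exp_neg _
    rw [hexp2]
    rw [inv_mul_lt_iff₀ (Real.exp_pos _), mul_one]
    exact hg

lemma aux_main {Ω : Type*} {m0 : MeasurableSpace Ω} {μ : Measure Ω}
    [IsProbabilityMeasure μ] (F : Filtration ℕ m0)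
    (d : ℕ) (hd : 1 ≤ d) (p : ℝ) (hp : p ∈ Set.Ioo (0:ℝ) 1)
    (T : ℕ → Ω → ℕ) (hT0 : ∀ ω, T 0 ω = 0)
    (hstop : ∀ k, IsStoppingTime F (fun ω => (T k ω : WithTop ℕ)))
    (hcond : ∀ k m : ℕ, ∀ᵐ ω ∂μ,
      (μ[Set.indicator {ω' | m * d < T (k + 1) ω' - T k ω'} (fun _ => (1:ℝ)) |
        (hstop k).measurableSpace]) ω ≤ (1 - p) ^ m)
    (a : ℝ) (ha : (d:ℝ)/p < a) :
    ∀ᵐ ω ∂μ, ∀ᶠ k in atTop, (T k ω : ℝ) ≤ a * k := by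
  obtain ⟨hp0, hp1⟩ := hp
  obtain ⟨l, hl0, hrp, hρlt⟩ := aux_lambda d hd p a hp0 hp1 ha
  have hd0 : (0:ℝ) < d := by exact_mod_cast hd
  have ha0 : 0 < a := lt_trans (by positivity) ha
  set r := Real.exp (l * d) with hrdef
  have hr0 : 0 < r := Real.exp_pos _
  have hr1 : 1 ≤ r := Real.one_le_exp (by positivity)
  set q : ℝ := (1 - p) * r with hqdef
  have hq0 : 0 ≤ q := mul_nonneg (by linarith) hr0.le
  have hq1 : q < 1 := hrp
  set g : ℝ := 1 + (r - 1) / (1 - q) with hgdef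
  have hg1 : 1 ≤ g := by
    have h : 0 ≤ (r - 1) / (1 - q) := div_nonneg (by linarith) (by linarith)
    rw [hgdef]
    linarith
  set ρ : ℝ := Real.exp (-(l * a)) * g with hρdef
  have hρ0 : 0 ≤ ρ := mul_nonneg (Real.exp_pos _).le (by linarith)
  have hTk : ∀ k, Measurable[(hstop k).measurableSpace] (T k) := fun k =>
    (hstop k).measurable.untopD 0
  have hTmeas : ∀ k, Measurable (T k) := fun k =>
    (hTk k).mono (hstop k).measurableSpace_le le_rfl
  -- truncated exponential moment bound
  set Y : ℕ → ℕ → Ω → ℝ := fun N k ω => Real.exp (l * min (T k ω) (N * d)) with hYdef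
  have hY0 : ∀ N k ω, 0 ≤ Y N k ω := fun N k ω => (Real.exp_pos _).le
  have hYc : ∀ N k ω, Y N k ω ≤ Real.exp (l * (N * d)) := by
    intro N k ω
    apply Real.exp_le_exp.2
    apply mul_le_mul_of_nonneg_left _ hl0.le
    exact_mod_cast Nat.cast_le.2 (min_le_right _ _)
  have hYsm : ∀ N k, StronglyMeasurable[(hstop k).measurableSpace] (Y N k) := by
    intro N k
    have h1 : Measurable (fun n : ℕ => Real.exp (l * min n (N * d))) := measurable_from_top
    exact (h1.comp (hTk k)).stronglyMeasurable
  have hYint : ∀ N k, Integrable (Y N k) μ := by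
    intro N k
    refine Integrable.mono' (integrable_const (Real.exp (l * (N*d))))
      (((hYsm N k).mono (hstop k).measurableSpace_le).aestronglyMeasurable) ?_
    exact Eventually.of_forall fun ω => by
      rw [Real.norm_eq_abs, abs_of_nonneg (hY0 N k ω)]; exact hYc N k ω
  have hYnonneg : ∀ N k, 0 ≤ ∫ ω, Y N k ω ∂μ := fun N k =>
    integral_nonneg (fun ω => hY0 N k ω)
  -- step
  have hstep : ∀ N k, ∫ ω, Y N (k+1) ω ∂μ ≤ g * ∫ ω, Y N k ω ∂μ := by
    intro N k
    set A : ℕ → Set Ω := fun m => {ω | m * d < T (k + 1) ω - T k ω} with hAdef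
    have hAmeas : ∀ m, MeasurableSet (A m) := by
      intro m
      have : Measurable (fun ω => T (k+1) ω - T k ω) := (hTmeas (k+1)).sub (hTmeas k)
      exact this measurableSet_Ioi
    -- pointwise bound
    have hpt : ∀ ω, Y N (k+1) ω ≤ Y N k ω *
        (1 + (r - 1) * ∑ m ∈ Finset.range N, r ^ m * (A m).indicator (fun _ => (1:ℝ)) ω) := by
      intro ω
      set x := T (k+1) ω - T k ω with hx
      have h1 : min (T (k+1) ω) (N*d) ≤ min (T k ω) (N*d) + min x (N*d) := by
        have h2 : T (k+1) ω ≤ T k ω + x := by omega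
        calc min (T (k+1) ω) (N*d) ≤ min (T k ω + x) (N*d) :=
              min_le_min (by omega) le_rfl
          _ ≤ min (T k ω) (N*d) + min x (N*d) := by omega
      have h3 : Y N (k+1) ω ≤ Y N k ω * Real.exp (l * min x (N*d)) := by
        rw [hYdef]
        simp only
        rw [← Real.exp_add]
        apply Real.exp_le_exp.2
        have : ((min (T (k+1) ω) (N*d) : ℕ) : ℝ) ≤
            ((min (T k ω) (N*d) + min x (N*d) : ℕ) : ℝ) := Nat.cast_le.2 h1
        calc l * ((min (T (k+1) ω) (N*d) : ℕ) : ℝ)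
            ≤ l * ((min (T k ω) (N*d) + min x (N*d) : ℕ) : ℝ) :=
              mul_le_mul_of_nonneg_left this hl0.le
          _ = l * ((min (T k ω) (N*d) : ℕ) : ℝ) + l * ((min x (N*d) : ℕ) : ℝ) := by
              push_cast; ring
      have h4 := aux_layer l hl0.le d N x hd
      have h5 : ∀ m, (if m * d < x then (1:ℝ) else 0) =
          (A m).indicator (fun _ => (1:ℝ)) ω := by
        intro m
        rw [Set.indicator_apply]
        simp only [hAdef, Set.mem_setOf_eq, hx]
      rw [← hrdef] at h4
      simp_rw [h5] at h4
      calc Y N (k+1) ω ≤ Y N k ω * Real.exp (l * min x (N*d)) := h3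
        _ ≤ Y N k ω * (1 + (r - 1) * ∑ m ∈ Finset.range N,
              r ^ m * (A m).indicator (fun _ => (1:ℝ)) ω) :=
            mul_le_mul_of_nonneg_left h4 (hY0 N k ω)
    -- integrate
    have hIndInt : ∀ m, Integrable (fun ω => Y N k ω * (A m).indicator (fun _ => (1:ℝ)) ω) μ := by
      intro m
      refine Integrable.mono' (integrable_const (Real.exp (l * (N*d))))
        ((((hYsm N k).mono (hstop k).measurableSpace_le).aestronglyMeasurable).mul
          (((integrable_const (1:ℝ)).indicator (hAmeas m)).aestronglyMeasurable)) ?_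
      refine Eventually.of_forall fun ω => ?_
      rw [Real.norm_eq_abs, abs_mul]
      by_cases h : ω ∈ A m
      · rw [Set.indicator_of_mem h]
        simp only [abs_one, mul_one]
        rw [abs_of_nonneg (hY0 N k ω)]
        exact hYc N k ω
      · rw [Set.indicator_of_notMem h]
        simp only [abs_zero, mul_zero]
        positivity
    have hRHSint : Integrable (fun ω => Y N k ω + (r - 1) * ∑ m ∈ Finset.range N,
        r ^ m * (Y N k ω * (A m).indicator (fun _ => (1:ℝ)) ω)) μ := by
      refine (hYint N k).add (Integrable.const_mul ?_ _)
      exact (integrable_finset_sum _ (fun m _ => (hIndInt m).const_mul _))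
    have hpt2 : ∀ ω, Y N (k+1) ω ≤ Y N k ω + (r - 1) * ∑ m ∈ Finset.range N,
        r ^ m * (Y N k ω * (A m).indicator (fun _ => (1:ℝ)) ω) := by
      intro ω
      refine (hpt ω).trans_eq ?_
      rw [mul_add, mul_one]
      congr 1
      simp only [Finset.mul_sum]
      apply Finset.sum_congr rfl
      intro m _
      ring
    have hint1 : ∫ ω, Y N (k+1) ω ∂μ ≤ ∫ ω, (Y N k ω + (r - 1) * ∑ m ∈ Finset.range N,
        r ^ m * (Y N k ω * (A m).indicator (fun _ => (1:ℝ)) ω)) ∂μ :=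
      integral_mono (hYint N (k+1)) hRHSint hpt2
    have hint2 : ∫ ω, (Y N k ω + (r - 1) * ∑ m ∈ Finset.range N,
        r ^ m * (Y N k ω * (A m).indicator (fun _ => (1:ℝ)) ω)) ∂μ
        = ∫ ω, Y N k ω ∂μ + (r - 1) * ∑ m ∈ Finset.range N,
          r ^ m * ∫ ω, Y N k ω * (A m).indicator (fun _ => (1:ℝ)) ω ∂μ := by
      rw [integral_add (hYint N k)]
      · congr 1
        rw [integral_const_mul]
        congr 1
        rw [integral_finset_sum _ (fun m _ => (hIndInt m).const_mul _)]
        apply Finset.sum_congr rfl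
        intro m _
        rw [integral_const_mul]
      · exact Integrable.const_mul
          (integrable_finset_sum _ (fun m _ => (hIndInt m).const_mul _)) _
    have hpull : ∀ m, ∫ ω, Y N k ω * (A m).indicator (fun _ => (1:ℝ)) ω ∂μ
        ≤ (1 - p) ^ m * ∫ ω, Y N k ω ∂μ := by
      intro m
      exact aux_pullout (hstop k).measurableSpace_le (hYsm N k) (hY0 N k)
        (Real.exp_pos _).le (hYc N k) (hAmeas m)
        (pow_nonneg (by linarith) m) (hcond k m)
    set I : ℝ := ∫ ω, Y N k ω ∂μ with hIdef
    have hI0 : 0 ≤ I := hYnonneg N k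
    have hsum2 : ∑ m ∈ Finset.range N,
        r ^ m * ∫ ω, Y N k ω * (A m).indicator (fun _ => (1:ℝ)) ω ∂μ
        ≤ (∑ m ∈ Finset.range N, q ^ m) * I := by
      rw [Finset.sum_mul]
      apply Finset.sum_le_sum
      intro m _
      calc r ^ m * ∫ ω, Y N k ω * (A m).indicator (fun _ => (1:ℝ)) ω ∂μ
          ≤ r ^ m * ((1 - p) ^ m * I) :=
            mul_le_mul_of_nonneg_left (hpull m) (pow_nonneg hr0.le m)
        _ = q ^ m * I := by rw [hqdef, mul_pow]; ring
    have hgeo : ∑ m ∈ Finset.range N, q ^ m ≤ 1 / (1 - q) := by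
      rw [le_div_iff₀ (by linarith)]
      nlinarith [geom_sum_mul q N, pow_nonneg hq0 N]
    calc ∫ ω, Y N (k+1) ω ∂μ
        ≤ I + (r - 1) * ∑ m ∈ Finset.range N,
            r ^ m * ∫ ω, Y N k ω * (A m).indicator (fun _ => (1:ℝ)) ω ∂μ :=
          hint1.trans_eq hint2
      _ ≤ I + (r - 1) * ((∑ m ∈ Finset.range N, q ^ m) * I) := by
          have := mul_le_mul_of_nonneg_left hsum2 (by linarith : (0:ℝ) ≤ r - 1)
          linarith
      _ ≤ I + (r - 1) * ((1 / (1 - q)) * I) := by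
          have h6 : (∑ m ∈ Finset.range N, q ^ m) * I ≤ (1 / (1 - q)) * I :=
            mul_le_mul_of_nonneg_right hgeo hI0
          have := mul_le_mul_of_nonneg_left h6 (by linarith : (0:ℝ) ≤ r - 1)
          linarith
      _ = g * I := by rw [hgdef]; field_simp
  -- induction
  have hmom : ∀ N k, ∫ ω, Y N k ω ∂μ ≤ g ^ k := by
    intro N k
    induction k with
    | zero =>
      have : ∀ ω, Y N 0 ω = 1 := by
        intro ω
        rw [hYdef]
        simp [hT0 ω]
      rw [show (fun ω => Y N 0 ω) = (fun _ => (1:ℝ)) from funext this]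
      simp
    | succ k ih =>
      calc ∫ ω, Y N (k+1) ω ∂μ ≤ g * ∫ ω, Y N k ω ∂μ := hstep N k
        _ ≤ g * g ^ k := mul_le_mul_of_nonneg_left ih (by linarith)
        _ = g ^ (k+1) := by ring
  -- Markov bound
  have hmarkov : ∀ k : ℕ, μ {ω | a * k < (T k ω : ℝ)} ≤ ENNReal.ofReal (ρ ^ k) := by
    intro k
    set c : ℕ := Nat.floor (a * k) + 1 with hcdef
    have hak0 : 0 ≤ a * k := by positivity
    have hcak : a * k < (c : ℝ) := by
      rw [hcdef]
      push_cast
      exact Nat.lt_floor_add_one _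
    have hsub : {ω | a * k < (T k ω : ℝ)} ⊆ {ω | Real.exp (l * c) ≤ Y c k ω} := by
      intro ω hω
      simp only [Set.mem_setOf_eq] at hω ⊢
      have hcT : c ≤ T k ω := by
        have : Nat.floor (a * k) < T k ω := (Nat.floor_lt hak0).2 hω
        omega
      have hccd : c ≤ c * d := Nat.le_mul_of_pos_right c (by omega)
      have : c ≤ min (T k ω) (c * d) := le_min hcT hccd
      apply Real.exp_le_exp.2
      apply mul_le_mul_of_nonneg_left _ hl0.le
      exact_mod_cast Nat.cast_le.2 this
    have hmark := mul_meas_ge_le_integral_of_nonneg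
      (Eventually.of_forall (hY0 c k)) (hYint c k) (Real.exp (l * c))
    have htoReal : (μ {ω | a * k < (T k ω : ℝ)}).toReal ≤ ρ ^ k := by
      have h7 : (μ {ω | a * k < (T k ω : ℝ)}).toReal ≤
          (μ {ω | Real.exp (l * c) ≤ Y c k ω}).toReal := by
        apply ENNReal.toReal_mono (measure_ne_top μ _)
        exact measure_mono hsub
      have h8 : (μ {ω | Real.exp (l * c) ≤ Y c k ω}).toReal ≤
          Real.exp (-(l * c)) * g ^ k := by
        have hepos : 0 < Real.exp (l * c) := Real.exp_pos _
        have h9 : Real.exp (l * c) * (μ {ω | Real.exp (l * c) ≤ Y c k ω}).toReal ≤ g ^ k :=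
          hmark.trans (hmom c k)
        rw [Real.exp_neg]
        rw [inv_mul_eq_div, le_div_iff₀ hepos]
        linarith [h9]
      have h10 : Real.exp (-(l * c)) * g ^ k ≤ ρ ^ k := by
        rw [hρdef, mul_pow, ← Real.exp_nat_mul]
        apply mul_le_mul_of_nonneg_right _ (pow_nonneg (by linarith) k)
        apply Real.exp_le_exp.2
        have : l * (a * k) ≤ l * c := mul_le_mul_of_nonneg_left hcak.le hl0.le
        nlinarith
      linarith
    rw [← ENNReal.ofReal_toReal (measure_ne_top μ _)]
    exact ENNReal.ofReal_le_ofReal htoReal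
  -- Borel-Cantelli
  have htsum : ∑' k, μ {ω | a * k < (T k ω : ℝ)} ≠ ⊤ := by
    have h11 : ∑' k, μ {ω | a * (k:ℕ) < (T k ω : ℝ)} ≤
        ∑' k : ℕ, ENNReal.ofReal ρ ^ k := by
      apply ENNReal.tsum_le_tsum
      intro k
      rw [← ENNReal.ofReal_pow hρ0]
      exact hmarkov k
    have h12 : ∑' k : ℕ, ENNReal.ofReal ρ ^ k = (1 - ENNReal.ofReal ρ)⁻¹ :=
      ENNReal.tsum_geometric _
    have h13 : ENNReal.ofReal ρ < 1 := by
      rw [← ENNReal.ofReal_one]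
      exact ENNReal.ofReal_lt_ofReal_iff_of_nonneg hρ0 |>.2 hρlt
    have h14 : (1 - ENNReal.ofReal ρ)⁻¹ ≠ ⊤ := by
      rw [ENNReal.inv_ne_top]
      intro hcontra
      rw [tsub_eq_zero_iff_le] at hcontra
      exact absurd hcontra (not_le.2 h13)
    exact ne_top_of_le_ne_top (h12 ▸ h14) h11
  have hBC := MeasureTheory.ae_finite_setOf_mem htsum
  filter_upwards [hBC] with ω hω
  have hfin : {k : ℕ | a * k < (T k ω : ℝ)}.Finite := hω
  obtain ⟨K, hK⟩ := hfin.bddAbove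
  rw [eventually_atTop]
  refine ⟨K + 1, fun k hk => ?_⟩
  by_contra hcon
  push_neg at hcon
  have : k ∈ {k : ℕ | a * k < (T k ω : ℝ)} := hcon
  have := hK this
  omega

end Aux

/-- if `T 0 = 0` and the return-time increments satisfy the conditional
geometric tail bound `P(T_{k+1} - T_k > m d | F_{T_k}) ≤ (1-p)^m`, then almost surely
`limsup T_k / k ≤ d / p`; in particular a.s. there is a finite `C_T` with
`T_k ≤ C_T k` for all `k`. -/
theorem stmt_13 {Ω : Type*} {m0 : MeasurableSpace Ω} {μ : Measure Ω}
    [IsProbabilityMeasure μ] (F : Filtration ℕ m0)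
    (d : ℕ) (hd : 1 ≤ d) (p : ℝ) (hp : p ∈ Set.Ioo (0:ℝ) 1)
    (T : ℕ → Ω → ℕ) (hT0 : ∀ ω, T 0 ω = 0)
    (hstop : ∀ k, IsStoppingTime F (fun ω => (T k ω : WithTop ℕ)))
    (hcond : ∀ k m : ℕ, ∀ᵐ ω ∂μ,
      (μ[Set.indicator {ω' | m * d < T (k + 1) ω' - T k ω'} (fun _ => (1:ℝ)) |
        (hstop k).measurableSpace]) ω ≤ (1 - p) ^ m) :
    ∀ᵐ ω ∂μ,
      (Filter.atTop.limsup (fun k : ℕ => (T k ω : ℝ) / k) ≤ d / p) ∧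
      ∃ C : ℝ, ∀ k : ℕ, (T k ω : ℝ) ≤ C * k := by
  obtain ⟨hp0, hp1⟩ := hp
  have haux : ∀ n : ℕ, ∀ᵐ ω ∂μ,
      ∀ᶠ k in atTop, (T k ω : ℝ) ≤ ((d:ℝ)/p + 1/(n+1)) * k := by
    intro n
    apply aux_main F d hd p ⟨hp0, hp1⟩ T hT0 hstop hcond
    have : 0 < 1/((n:ℝ)+1) := by positivity
    linarith
  filter_upwards [ae_all_iff.2 haux] with ω hω
  constructor
  · have hls : ∀ n : ℕ,
        Filter.atTop.limsup (fun k : ℕ => (T k ω : ℝ)/k) ≤ (d:ℝ)/p + 1/(n+1) := by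
      intro n
      apply Filter.limsup_le_of_le
      · refine isCoboundedUnder_le_of_le (f := fun k : ℕ => (T k ω : ℝ)/k)
          atTop (x := 0) fun k => ?_
        show (0:ℝ) ≤ (T k ω : ℝ)/k
        positivity
      · obtain ⟨K, hK⟩ := eventually_atTop.1 (hω n)
        rw [eventually_atTop]
        refine ⟨max K 1, fun k hk => ?_⟩
        have hk1 : 1 ≤ k := le_trans (le_max_right _ _) hk
        have hkK : K ≤ k := le_trans (le_max_left _ _) hk
        have hkpos : (0:ℝ) < k := by exact_mod_cast hk1
        rw [div_le_iff₀ hkpos]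
        exact hK k hkK
    have hlim : Tendsto (fun n : ℕ => (d:ℝ)/p + 1/(n+1)) atTop (nhds ((d:ℝ)/p)) := by
      have h1 := tendsto_one_div_add_atTop_nhds_zero_nat (𝕜 := ℝ)
      have h2 := (tendsto_const_nhds (x := (d:ℝ)/p) (f := atTop)).add h1
      simpa using h2
    exact ge_of_tendsto hlim (Eventually.of_forall hls)
  · obtain ⟨K, hK⟩ := eventually_atTop.1 (hω 0)
    simp only [Nat.cast_zero] at hK
    have ha0 : (0:ℝ) ≤ (d:ℝ)/p + 1/(0+1) := by positivity
    set a : ℝ := (d:ℝ)/p + 1/(0+1) with hadef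
    set C : ℝ := a + 1 + ∑ j ∈ Finset.range K, (T j ω : ℝ) with hCdef
    have hsum0 : 0 ≤ ∑ j ∈ Finset.range K, (T j ω : ℝ) :=
      Finset.sum_nonneg fun j _ => by positivity
    have hC0 : 0 ≤ C := by rw [hCdef]; linarith
    have hCa : a ≤ C := by rw [hCdef]; linarith
    refine ⟨C, fun k => ?_⟩
    rcases lt_or_ge k K with h | h
    · rcases Nat.eq_zero_or_pos k with h0 | h0
      · subst h0; simp [hT0 ω]
      · have h1 : (T k ω : ℝ) ≤ ∑ j ∈ Finset.range K, (T j ω : ℝ) :=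
          Finset.single_le_sum (f := fun j => ((T j ω : ℝ)))
            (fun j _ => by positivity) (Finset.mem_range.2 h)
        have h2 : (T k ω : ℝ) ≤ C := by rw [hCdef]; linarith
        calc (T k ω : ℝ) ≤ C := h2
          _ ≤ C * k := le_mul_of_one_le_right hC0 (by exact_mod_cast h0)
    · calc (T k ω : ℝ) ≤ a * k := hK k h
        _ ≤ C * k := mul_le_mul_of_nonneg_right hCa (by positivity)
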